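/- If P and Q are product distributions on R^d whose per-coordinate variances are each at most σ², and d_TV(P,Q) ≤ 1/2, then the ℓ1 distance between their mean vectors satisfies ‖E_P[X] − E_Q[X]‖₁ ≤ 4√(dσ²). -/

import Mathlib

open MeasureTheory

/-- Total variation distance between two measures: `sup_S |P(S) - Q(S)|`. -/
noncomputable def tvDist {Ω : Type*} [MeasurableSpace Ω] (P Q : Measure Ω) : ℝ :=
  ⨆ S : Set Ω, |(P S).toReal - (Q S).toReal|

section Aux
variable {d : ℕ} (μ : Fin d → Measure ℝ) [∀ i, IsProbabilityMeasure (μ i)]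

lemma map_eval_pi (i : Fin d) : (Measure.pi μ).map (Function.eval i) = μ i := by
  refine Measure.ext fun s hs => ?_
  rw [Measure.map_apply (measurable_pi_apply i) hs, Set.eval_preimage, Measure.pi_pi,
    Fintype.prod_eq_single i (fun j hj => by simp [Function.update_of_ne hj])]
  simp

lemma measurePreserving_eval_pi (i : Fin d) :
    MeasurePreserving (Function.eval i) (Measure.pi μ) (μ i) :=
  ⟨measurable_pi_apply i, map_eval_pi μ i⟩

lemma integral_eval_pi (i : Fin d) :
    ∫ x, x i ∂(Measure.pi μ) = ∫ x, x ∂(μ i) := by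
  have := integral_map (μ := Measure.pi μ) (φ := Function.eval i) (f := fun y : ℝ => y)
    (measurable_pi_apply i).aemeasurable aestronglyMeasurable_id
  rw [map_eval_pi μ i] at this
  exact this.symm

lemma memℒp_eval_pi (i : Fin d) (h : MemLp id 2 (μ i)) :
    MemLp (fun x : Fin d → ℝ => x i) 2 (Measure.pi μ) :=
  h.comp_measurePreserving (measurePreserving_eval_pi μ i)

lemma variance_eval_pi (i : Fin d) (h : MemLp id 2 (μ i)) :
    ProbabilityTheory.variance (fun x : Fin d → ℝ => x i) (Measure.pi μ)
      = ProbabilityTheory.variance id (μ i) := by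
  rw [ProbabilityTheory.variance_eq_sub (memℒp_eval_pi μ i h),
    ProbabilityTheory.variance_eq_sub h, integral_eval_pi μ i]
  congr 1
  simp only [Pi.pow_apply, Function.eval, id]
  rw [← map_eval_pi μ i,
    integral_map (measurable_pi_apply i).aemeasurable
      (by exact (measurable_id.pow_const 2).aestronglyMeasurable)]

lemma indepFun_eval_pi {i j : Fin d} (hij : i ≠ j) :
    ProbabilityTheory.IndepFun (fun x : Fin d → ℝ => x i) (fun x => x j) (Measure.pi μ) := by
  show ProbabilityTheory.IndepFun (Function.eval i) (Function.eval j) (Measure.pi μ)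
  rw [ProbabilityTheory.indepFun_iff_measure_inter_preimage_eq_mul]
  intro s t hs ht
  have h1 : Function.eval i ⁻¹' s ∩ Function.eval j ⁻¹' t
      = Set.pi Set.univ (fun k => if k = i then s else if k = j then t else Set.univ) := by
    ext x
    simp only [Set.mem_inter_iff, Set.mem_preimage, Set.mem_univ_pi, Function.eval]
    constructor
    · rintro ⟨h1, h2⟩ k
      split_ifs with hki hkj
      · subst hki; exact h1
      · subst hkj; exact h2
      · trivial
    · intro h
      refine ⟨?_, ?_⟩
      · have := h i; simpa using this
      · have := h j; simpa [if_neg hij.symm] using this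
  have h2 : ∀ k : Fin d, μ k (if k = i then s else if k = j then t else Set.univ)
      = (if k = i then μ i s else 1) * (if k = j then μ j t else 1) := by
    intro k
    rcases eq_or_ne k i with rfl | hki
    · simp [hij]
    · rcases eq_or_ne k j with rfl | hkj
      · simp [hki]
      · simp [hki, hkj]
  rw [h1, Measure.pi_pi]
  calc (∏ k, μ k (if k = i then s else if k = j then t else Set.univ))
      = (∏ k : Fin d, if k = i then μ i s else 1)
        * ∏ k : Fin d, if k = j then μ j t else 1 := by
        rw [← Finset.prod_mul_distrib]; exact Finset.prod_congr rfl fun k _ => h2 k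
    _ = μ i s * μ j t := by rw [Finset.prod_ite_eq', Finset.prod_ite_eq']; simp
    _ = _ := by
        rw [← Measure.map_apply (measurable_pi_apply i) hs,
          ← Measure.map_apply (measurable_pi_apply j) ht, map_eval_pi, map_eval_pi]

end Aux

set_option maxHeartbeats 1000000 in
/-- If `P` and `Q` are product distributions on `ℝ^d` with per-coordinate variance at most `σ²`
and `d_TV(P,Q) ≤ 1/2`, then the `ℓ₁` distance between their means is at most `4√(dσ²)`. -/
theorem product_tv_mean_l1 (d : ℕ) (σ : ℝ) (hσ : 0 ≤ σ)
    (μ ν : Fin d → Measure ℝ)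
    (hμprob : ∀ i, IsProbabilityMeasure (μ i)) (hνprob : ∀ i, IsProbabilityMeasure (ν i))
    (hμL2 : ∀ i, MemLp id 2 (μ i)) (hνL2 : ∀ i, MemLp id 2 (ν i))
    (hμvar : ∀ i, ProbabilityTheory.variance id (μ i) ≤ σ ^ 2)
    (hνvar : ∀ i, ProbabilityTheory.variance id (ν i) ≤ σ ^ 2)
    (htv : tvDist (Measure.pi μ) (Measure.pi ν) ≤ 1 / 2) :
    ∑ i, |(∫ x, x ∂(μ i)) - ∫ x, x ∂(ν i)| ≤ 4 * Real.sqrt (d * σ ^ 2) := by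
  classical
  haveI : ∀ i, IsProbabilityMeasure (μ i) := hμprob
  haveI : ∀ i, IsProbabilityMeasure (ν i) := hνprob
  set m : Fin d → ℝ := fun i => ∫ x, x ∂(μ i) with hm
  set n : Fin d → ℝ := fun i => ∫ x, x ∂(ν i) with hn
  set ε : Fin d → ℝ := fun i => if n i ≤ m i then 1 else -1 with hεdef
  have hε1 : ∀ i, ε i ^ 2 = 1 := by
    intro i; by_cases h : n i ≤ m i <;> simp [hεdef, h]
  have hεabs : ∀ i, ε i * (m i - n i) = |m i - n i| := by
    intro i; by_cases h : n i ≤ m i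
    · rw [abs_of_nonneg (by linarith)]; simp [hεdef, h]
    · rw [abs_of_neg (by linarith)]; simp [hεdef, h]
  set L : ℝ := ∑ i, |m i - n i| with hLdef
  have hL0 : 0 ≤ L := Finset.sum_nonneg fun i _ => abs_nonneg _
  have hdσ : (0:ℝ) ≤ (d : ℝ) * σ ^ 2 := by positivity
  rcases eq_or_lt_of_le hL0 with heq | hpos
  · rw [← heq]; positivity
  -- the test statistic
  set X : Fin d → (Fin d → ℝ) → ℝ := fun i x => ε i * x i with hX
  set f : (Fin d → ℝ) → ℝ := ∑ i, X i with hf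
  have hfapp : ∀ x, f x = ∑ i, ε i * x i := fun x => by
    rw [hf]; exact Finset.sum_apply _ _ _
  have hfeq : f = fun x => ∑ i, ε i * x i := funext hfapp
  have hfmeas : Measurable f := by
    rw [hfeq]
    exact Finset.measurable_sum _ fun i _ => (measurable_const_mul (ε i)).comp (measurable_pi_apply i)
  set P := Measure.pi μ with hP
  set Q := Measure.pi ν with hQ
  -- L2 membership
  have hXL2P : ∀ i, MemLp (X i) 2 P := fun i =>
    (memℒp_eval_pi μ i (hμL2 i)).const_mul (ε i)
  have hXL2Q : ∀ i, MemLp (X i) 2 Q := fun i =>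
    (memℒp_eval_pi ν i (hνL2 i)).const_mul (ε i)
  have hfL2P : MemLp f 2 P := memLp_finset_sum' _ fun i _ => hXL2P i
  have hfL2Q : MemLp f 2 Q := memLp_finset_sum' _ fun i _ => hXL2Q i
  -- means
  set Mv : ℝ := ∑ i, ε i * m i with hMv
  set Nv : ℝ := ∑ i, ε i * n i with hNv
  have hmeanP : ∫ x, f x ∂P = Mv := by
    simp only [hfapp]
    rw [integral_finset_sum _ fun i _ => ((hXL2P i).integrable one_le_two)]
    exact Finset.sum_congr rfl fun i _ => by
      rw [integral_const_mul, integral_eval_pi μ i]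
  have hmeanQ : ∫ x, f x ∂Q = Nv := by
    simp only [hfapp]
    rw [integral_finset_sum _ fun i _ => ((hXL2Q i).integrable one_le_two)]
    exact Finset.sum_congr rfl fun i _ => by
      rw [integral_const_mul, integral_eval_pi ν i]
  have hMN : Mv - Nv = L := by
    rw [hMv, hNv, ← Finset.sum_sub_distrib]
    exact Finset.sum_congr rfl fun i _ => by rw [← mul_sub, hεabs]
  -- variances
  have hvarXP : ∀ i, ProbabilityTheory.variance (X i) P ≤ σ ^ 2 := by
    intro i
    have h1 : ProbabilityTheory.variance (X i) P
        = ε i ^ 2 * ProbabilityTheory.variance (fun x : Fin d → ℝ => x i) P :=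
      ProbabilityTheory.variance_const_mul (ε i) (fun x : Fin d → ℝ => x i) P
    rw [h1, hε1, one_mul, variance_eval_pi μ i (hμL2 i)]
    exact hμvar i
  have hvarXQ : ∀ i, ProbabilityTheory.variance (X i) Q ≤ σ ^ 2 := by
    intro i
    have h1 : ProbabilityTheory.variance (X i) Q
        = ε i ^ 2 * ProbabilityTheory.variance (fun x : Fin d → ℝ => x i) Q :=
      ProbabilityTheory.variance_const_mul (ε i) (fun x : Fin d → ℝ => x i) Q
    rw [h1, hε1, one_mul, variance_eval_pi ν i (hνL2 i)]
    exact hνvar i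
  have hindP : Set.Pairwise ↑(Finset.univ : Finset (Fin d))
      (fun i j => ProbabilityTheory.IndepFun (X i) (X j) P) := fun i _ j _ hij =>
    (indepFun_eval_pi μ hij).comp (measurable_const_mul (ε i)) (measurable_const_mul (ε j))
  have hindQ : Set.Pairwise ↑(Finset.univ : Finset (Fin d))
      (fun i j => ProbabilityTheory.IndepFun (X i) (X j) Q) := fun i _ j _ hij =>
    (indepFun_eval_pi ν hij).comp (measurable_const_mul (ε i)) (measurable_const_mul (ε j))
  have hvarP : ProbabilityTheory.variance f P ≤ (d : ℝ) * σ ^ 2 := by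
    rw [hf, ProbabilityTheory.IndepFun.variance_sum (fun i _ => hXL2P i) hindP]
    calc ∑ i, ProbabilityTheory.variance (X i) P ≤ ∑ _i : Fin d, σ ^ 2 :=
          Finset.sum_le_sum fun i _ => hvarXP i
      _ = (d : ℝ) * σ ^ 2 := by simp [Finset.sum_const, mul_comm]
  have hvarQ : ProbabilityTheory.variance f Q ≤ (d : ℝ) * σ ^ 2 := by
    rw [hf, ProbabilityTheory.IndepFun.variance_sum (fun i _ => hXL2Q i) hindQ]
    calc ∑ i, ProbabilityTheory.variance (X i) Q ≤ ∑ _i : Fin d, σ ^ 2 :=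
          Finset.sum_le_sum fun i _ => hvarXQ i
      _ = (d : ℝ) * σ ^ 2 := by simp [Finset.sum_const, mul_comm]
  -- threshold and Chebyshev
  set t : ℝ := Mv - L / 2 with ht
  set S : Set (Fin d → ℝ) := {x | t ≤ f x} with hSdef
  have hS : MeasurableSet S := measurableSet_le measurable_const hfmeas
  set B : ℝ := ((d : ℝ) * σ ^ 2) / (L / 2) ^ 2 with hB
  have hBnn : 0 ≤ B := by positivity
  have hhalf : (0:ℝ) < L / 2 := by linarith
  have chebP := ProbabilityTheory.meas_ge_le_variance_div_sq (μ := P) hfL2P hhalf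
  have chebQ := ProbabilityTheory.meas_ge_le_variance_div_sq (μ := Q) hfL2Q hhalf
  have hsubP : Sᶜ ⊆ {x | L / 2 ≤ |f x - ∫ a, f a ∂P|} := by
    intro x hx
    have hfx : f x < t := by
      simpa [hSdef, Set.mem_setOf_eq, not_le] using hx
    have : L / 2 ≤ |f x - Mv| := by
      rw [abs_sub_comm]
      calc L / 2 = Mv - t := by rw [ht]; ring
        _ ≤ Mv - f x := by linarith
        _ ≤ |Mv - f x| := le_abs_self _
    simpa [Set.mem_setOf_eq, hmeanP] using this
  have hsubQ : S ⊆ {x | L / 2 ≤ |f x - ∫ a, f a ∂Q|} := by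
    intro x hx
    have hfx : t ≤ f x := hx
    have : L / 2 ≤ |f x - Nv| := by
      calc L / 2 = t - Nv := by rw [ht]; linarith [hMN]
        _ ≤ f x - Nv := by linarith
        _ ≤ |f x - Nv| := le_abs_self _
    simpa [Set.mem_setOf_eq, hmeanQ] using this
  have hPc : (P Sᶜ).toReal ≤ B := by
    refine ENNReal.toReal_le_of_le_ofReal hBnn ?_
    refine le_trans (measure_mono hsubP) (le_trans chebP ?_)
    exact ENNReal.ofReal_le_ofReal
      (div_le_div_of_nonneg_right hvarP (by positivity) |>.trans_eq rfl)
  have hQS : (Q S).toReal ≤ B := by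
    refine ENNReal.toReal_le_of_le_ofReal hBnn ?_
    refine le_trans (measure_mono hsubQ) (le_trans chebQ ?_)
    exact ENNReal.ofReal_le_ofReal
      (div_le_div_of_nonneg_right hvarQ (by positivity) |>.trans_eq rfl)
  have hPsum : (P S).toReal + (P Sᶜ).toReal = 1 := by
    have h := measure_add_measure_compl (μ := P) hS
    have := congrArg ENNReal.toReal h
    rwa [ENNReal.toReal_add (measure_ne_top P S) (measure_ne_top P Sᶜ),
      measure_univ, ENNReal.toReal_one] at this
  have hPS : 1 - B ≤ (P S).toReal := by linarith
  -- TV bound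
  have htvS : (P S).toReal - (Q S).toReal ≤ tvDist P Q := by
    have hb : BddAbove (Set.range fun T : Set (Fin d → ℝ) =>
        |(P T).toReal - (Q T).toReal|) := by
      refine ⟨1, ?_⟩
      rintro _ ⟨T, rfl⟩
      have hP1 : (P T).toReal ≤ 1 :=
        ENNReal.toReal_le_of_le_ofReal zero_le_one (by simpa using prob_le_one)
      have hQ1 : (Q T).toReal ≤ 1 :=
        ENNReal.toReal_le_of_le_ofReal zero_le_one (by simpa using prob_le_one)
      have h0P : (0:ℝ) ≤ (P T).toReal := ENNReal.toReal_nonneg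
      have h0Q : (0:ℝ) ≤ (Q T).toReal := ENNReal.toReal_nonneg
      rw [abs_sub_le_iff]
      constructor <;> linarith
    exact le_trans (le_abs_self _) (le_ciSup hb S)
  have hBq : 1 / 4 ≤ B := by
    have : 1 - B - B ≤ 1 / 2 := by
      calc 1 - B - B ≤ (P S).toReal - (Q S).toReal := by linarith
        _ ≤ tvDist P Q := htvS
        _ ≤ 1 / 2 := htv
    linarith
  have h16 : L ^ 2 ≤ 16 * ((d : ℝ) * σ ^ 2) := by
    have hden : (0:ℝ) < (L / 2) ^ 2 := by positivity
    rw [hB, le_div_iff₀ hden] at hBq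
    nlinarith
  nlinarith [Real.sq_sqrt hdσ, Real.sqrt_nonneg ((d : ℝ) * σ ^ 2)]
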